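/- Let V be an infinite virtually cyclic group with unique maximal normal finite subgroup K_V and set Q_V := V/K_V. Then Q_V is infinite cyclic if and only if V is of type I, and Q_V is isomorphic to the infinite dihedral group D∞ if and only if V is of type II. -/

import Mathlib

/-! Auxiliary lemmas -/

private lemma int_addSubgroup_index_ne_zero (A : AddSubgroup ℤ) (hA : A ≠ ⊥) : A.index ≠ 0 := by
  obtain ⟨a, ha⟩ := Int.subgroup_cyclic A
  rw [← AddSubgroup.zmultiples_eq_closure] at ha
  subst ha
  rw [Int.index_zmultiples]
  simp only [ne_eq, Int.natAbs_eq_zero]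
  rintro rfl
  exact hA (by simp [AddSubgroup.zmultiples_zero_eq_bot])

private lemma mult_int_index_ne_zero (T : Subgroup (Multiplicative ℤ)) (hT : T ≠ ⊥) :
    T.index ≠ 0 := by
  rw [← Subgroup.index_toAddSubgroup]
  refine int_addSubgroup_index_ne_zero _ ?_
  intro h
  exact hT (Subgroup.toAddSubgroup.injective (by rw [h]; rfl))

/-- A group is virtually cyclic if it contains a cyclic subgroup of finite index. -/
def VirtuallyCyclic (G : Type*) [Group G] : Prop :=
  ∃ H : Subgroup G, IsCyclic ↥H ∧ H.FiniteIndex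

/-- In an infinite virtually cyclic group, every infinite subgroup has finite index. -/
private lemma finiteIndex_of_infinite {V : Type*} [Group V] [Infinite V]
    (hV : VirtuallyCyclic V) (H : Subgroup V) (hH : Infinite H) : H.FiniteIndex := by
  obtain ⟨C, hcyc, hfi⟩ := hV
  have hcardV : Nat.card V = 0 := Nat.card_eq_zero_of_infinite
  have hCinf : Infinite C := by
    rw [← not_finite_iff_infinite]
    intro hfin
    have h1 := Subgroup.index_mul_card C
    rw [hcardV] at h1
    rcases Nat.mul_eq_zero.mp h1 with h | h
    · exact hfi.index_ne_zero h
    · exact (Nat.card_pos (α := C)).ne' h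
  -- the subgroup C ∩ H is infinite, pick a nontrivial element of it
  have hSinf : Infinite (C.subgroupOf H) := by
    rw [← not_finite_iff_infinite]
    intro hfin
    have h1 := Subgroup.index_mul_card (C.subgroupOf H)
    rw [Nat.card_eq_zero_of_infinite (α := H)] at h1
    rcases Nat.mul_eq_zero.mp h1 with h | h
    · exact (Subgroup.instFiniteIndex_subgroupOf C H).index_ne_zero h
    · exact (Nat.card_pos (α := C.subgroupOf H)).ne' h
  obtain ⟨s, hs⟩ := exists_ne (1 : C.subgroupOf H)
  have hdH : ((s : H) : V) ∈ H := (s : H).2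
  have hdC : ((s : H) : V) ∈ C := (Subgroup.mem_subgroupOf).mp s.2
  have hd1 : ((s : H) : V) ≠ 1 := by
    intro h
    apply hs
    have h2 : (s : H) = 1 := by exact_mod_cast OneMemClass.coe_eq_one.mp h
    exact_mod_cast OneMemClass.coe_eq_one.mp (by exact_mod_cast h2)
  -- an isomorphism of C with ℤ
  have e0 := zmodCyclicMulEquiv hcyc
  rw [Nat.card_eq_zero_of_infinite] at e0
  have e : Multiplicative ℤ ≃* C := e0
  set S : Subgroup C := (H ⊓ C).subgroupOf C with hS
  have hSne : S.comap e.toMonoidHom ≠ ⊥ := by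
    intro hbot
    have hmem : e.symm ⟨_, hdC⟩ ∈ S.comap e.toMonoidHom := by
      simp only [Subgroup.mem_comap, MulEquiv.coe_toMonoidHom, MulEquiv.apply_symm_apply]
      exact Subgroup.mem_subgroupOf.mpr ⟨hdH, hdC⟩
    rw [hbot, Subgroup.mem_bot] at hmem
    have h2 := congrArg e hmem
    rw [MulEquiv.apply_symm_apply, map_one] at h2
    exact hd1 (congrArg Subtype.val h2)
  have hSidx : S.index ≠ 0 := by
    rw [← Subgroup.index_comap_of_surjective S (f := e.toMonoidHom) e.surjective]
    exact mult_int_index_ne_zero _ hSne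
  have hrel : (H ⊓ C).relIndex C ≠ 0 := hSidx
  have hinf_idx : (H ⊓ C).index ≠ 0 := by
    rw [← Subgroup.relIndex_mul_index (inf_le_right : H ⊓ C ≤ C)]
    exact Nat.mul_ne_zero hrel hfi.index_ne_zero
  refine ⟨fun h0 => hinf_idx ?_⟩
  have hdvd := Subgroup.index_dvd_of_le (inf_le_left : H ⊓ C ≤ H)
  rw [h0] at hdvd
  exact zero_dvd_iff.mp hdvd

/-- The kernel of a surjection from an infinite virtually cyclic group onto an
infinite group is finite. -/
private lemma ker_finite {V W : Type*} [Group V] [Infinite V] [Group W] [Infinite W]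
    (hV : VirtuallyCyclic V) (f : V →* W) (hf : Function.Surjective f) :
    Finite f.ker := by
  rw [← not_infinite_iff_finite]
  intro h
  have hFI := finiteIndex_of_infinite hV f.ker h
  have hidx : f.ker.index = 0 := by
    have h2 := Nat.card_congr (QuotientGroup.quotientKerEquivOfSurjective f hf).toEquiv
    rw [Nat.card_eq_zero_of_infinite (α := W)] at h2
    exact h2
  exact hFI.index_ne_zero hidx

private lemma pow_ncard_eq_one {V : Type*} [Group V] {K : Subgroup V} [Finite K] {k : V}
    (hk : k ∈ K) : k ^ Nat.card K = 1 := by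
  have h : (⟨k, hk⟩ : K) ^ Nat.card K = 1 := pow_card_eq_one'
  have h2 := congrArg (Subtype.val) h
  rw [SubmonoidClass.coe_pow] at h2
  simpa using h2

private lemma map_eq_one_int {V : Type*} [Group V] (f : V →* Multiplicative ℤ)
    {k : V} {n : ℕ} (hn : n ≠ 0) (h : k ^ n = 1) : f k = 1 := by
  have h1 : (f k) ^ n = 1 := by rw [← map_pow, h, map_one]
  have h2 := congrArg Multiplicative.toAdd h1
  rw [Int.toAdd_pow] at h2
  have h3 : Multiplicative.toAdd (f k) = 0 := by
    rcases mul_eq_zero.mp h2 with h | h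
    · exact h
    · exact absurd (by exact_mod_cast h) hn
  have h4 := congrArg Multiplicative.ofAdd h3
  simpa using h4

open DihedralGroup in
private lemma r_pow' {n : ℕ} (m : ℕ) (i : ZMod n) :
    (r i : DihedralGroup n) ^ m = r ((m : ZMod n) * i) := by
  induction m with
  | zero => simp
  | succ t ih =>
      rw [pow_succ, ih, r_mul_r]
      exact congrArg r (by push_cast; ring)

open DihedralGroup in
private lemma sr_conj (j i : ℤ) :
    (r (j : ZMod 0) : DihedralGroup 0) * sr (i : ZMod 0) * (r (j : ZMod 0))⁻¹ =
      (sr ((i - 2 * j : ℤ) : ZMod 0) : DihedralGroup 0) := by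
  have key : ∀ a b : ZMod 0, (r a : DihedralGroup 0) * sr b * (r a)⁻¹ = sr (b - 2 * a) := by
    intro a b
    rw [mul_inv_eq_iff_eq_mul, r_mul_sr, sr_mul_r]
    exact congrArg sr (by ring)
  exact key j i

open DihedralGroup in
private lemma map_eq_one_dihedral {V : Type*} [Group V] (K : Subgroup V) [K.Normal] [Finite K]
    (f : V →* DihedralGroup 0) (hf : Function.Surjective f) {k : V} (hk : k ∈ K) :
    f k = 1 := by
  have hn : Nat.card K ≠ 0 := Nat.card_pos.ne'
  have hpow : k ^ Nat.card K = 1 := pow_ncard_eq_one hk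
  have hfk : (f k) ^ Nat.card K = 1 := by rw [← map_pow, hpow, map_one]
  rcases hEq : f k with i | i
  · rw [hEq, r_pow', one_def] at hfk
    have h0 : ((Nat.card K : ZMod 0)) * i = 0 := by injection hfk
    have h0' : ((Nat.card K : ℤ)) * (show ℤ from i) = 0 := h0
    have hi : (show ℤ from i) = 0 := by
      rcases mul_eq_zero.mp h0' with h | h
      · exact absurd (by exact_mod_cast h) hn
      · exact h
    rw [one_def]
    exact congrArg r hi
  · exfalso
    have hfin : (f '' (K : Set V)).Finite := (K : Set V).toFinite.image f
    refine Set.infinite_of_injective_forall_mem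
      (f := fun j : ℤ => (sr (((show ℤ from i) - 2 * j : ℤ)) : DihedralGroup 0)) ?_ ?_ hfin
    · intro a b hab
      simp only [sr.injEq] at hab
      have h2 : ∀ x y : ℤ, (sr x : DihedralGroup 0) = sr y → x = y := fun x y h => sr.inj h
      have h3 := h2 _ _ hab
      omega
    · intro j
      obtain ⟨v, hv⟩ := hf (r (show ZMod 0 from j) : DihedralGroup 0)
      refine ⟨v * k * v⁻¹, Subgroup.Normal.conj_mem ‹K.Normal› k hk v, ?_⟩
      show f (v * k * v⁻¹) = _
      rw [map_mul, map_mul, map_inv, hv, hEq]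
      exact sr_conj j (show ℤ from i)

/-- An infinite virtually cyclic group is of type I if it admits a surjective
homomorphism onto the infinite cyclic group ℤ. -/
def IsTypeI (G : Type*) [Group G] : Prop :=
  ∃ f : G →* Multiplicative ℤ, Function.Surjective f

/-- An infinite virtually cyclic group is of type II if it admits a surjective
homomorphism onto the infinite dihedral group D∞. -/
def IsTypeII (G : Type*) [Group G] : Prop :=
  ∃ f : G →* DihedralGroup 0, Function.Surjective f

/-- For an infinite virtually cyclic group `V` with maximal normal finite subgroup `K`,
the quotient `Q_V = V/K` is infinite cyclic iff `V` is of type I, and is isomorphic to the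
infinite dihedral group iff `V` is of type II. -/
theorem quotient_by_maximal_finite_normal_cyclic_iff (V : Type*) [Group V] [Infinite V]
    (hV : VirtuallyCyclic V) (K : Subgroup V) [K.Normal] [Finite K]
    (hmax : ∀ L : Subgroup V, L.Normal → Finite L → L ≤ K) :
    (Nonempty ((V ⧸ K) ≃* Multiplicative ℤ) ↔ IsTypeI V) ∧
    (Nonempty ((V ⧸ K) ≃* DihedralGroup 0) ↔ IsTypeII V) := by
  constructor
  · constructor
    · rintro ⟨e⟩
      exact ⟨e.toMonoidHom.comp (QuotientGroup.mk' K),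
        e.surjective.comp (QuotientGroup.mk'_surjective K)⟩
    · rintro ⟨f, hf⟩
      have hkerfin : Finite f.ker := ker_finite hV f hf
      have hKeq : K = f.ker := by
        apply le_antisymm
        · intro k hk
          exact map_eq_one_int f Nat.card_pos.ne' (pow_ncard_eq_one hk)
        · exact hmax f.ker inferInstance hkerfin
      exact ⟨(QuotientGroup.quotientMulEquivOfEq hKeq).trans
        (QuotientGroup.quotientKerEquivOfSurjective f hf)⟩
  · constructor
    · rintro ⟨e⟩
      exact ⟨e.toMonoidHom.comp (QuotientGroup.mk' K),
        e.surjective.comp (QuotientGroup.mk'_surjective K)⟩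
    · rintro ⟨f, hf⟩
      have hkerfin : Finite f.ker := ker_finite hV f hf
      have hKeq : K = f.ker := by
        apply le_antisymm
        · intro k hk
          exact map_eq_one_dihedral K f hf hk
        · exact hmax f.ker inferInstance hkerfin
      exact ⟨(QuotientGroup.quotientMulEquivOfEq hKeq).trans
        (QuotientGroup.quotientKerEquivOfSurjective f hf)⟩
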